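/- arXiv:1806.08543 — 2 statements merged into one kernel-verified Lean document; each statement's English description precedes it below -/
import Mathlib

section
/- Fix ξ ∈ ℝ³ with |ξ| ≤ ε for some ε ∈ (0,1], θ ∈ [0,1], and b² > a² > 0. Let û solve û'' + a²|ξ|²û + (b²−a²)(ξ·û)ξ + |ξ|^{2θ}û' = 0 with energy E(t) = |û'(t)|² + a²|ξ|²|û(t)|² + (b²−a²)|ξ·û(t)|². Then there exists a constant c > 0, independent of ξ and of the data, such that E(t) ≤ 3 e^{−c|ξ|^{2max{1−θ, θ}} t} E(0) for all t ≥ 0. -/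
open Set Complex

lemma hdw_re {f : ℝ → ℂ} {d : ℂ} {s : Set ℝ} {x : ℝ} (hf : HasDerivWithinAt f d s x) :
    HasDerivWithinAt (fun t => (f t).re) d.re s x :=
  (Complex.reCLM.hasFDerivAt.comp_hasDerivWithinAt x hf :)

lemma hdw_conj {f : ℝ → ℂ} {d : ℂ} {s : Set ℝ} {x : ℝ} (hf : HasDerivWithinAt f d s x) :
    HasDerivWithinAt (fun t => (starRingEnd ℂ) (f t)) ((starRingEnd ℂ) d) s x := by
  have := (Complex.conjCLE.toContinuousLinearMap.hasFDerivAt (x := f x)).comp_hasDerivWithinAt x hf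
  simpa [Function.comp_def, Complex.conjCAE_apply] using this

lemma hdw_mul_conj_re {f g : ℝ → ℂ} {d e : ℂ} {s : Set ℝ} {x : ℝ}
    (hf : HasDerivWithinAt f d s x) (hg : HasDerivWithinAt g e s x) :
    HasDerivWithinAt (fun t => (f t * (starRingEnd ℂ) (g t)).re)
      ((d * (starRingEnd ℂ) (g x)).re + (f x * (starRingEnd ℂ) e).re) s x := by
  have := hdw_re (hf.mul (hdw_conj hg))
  simpa using this

lemma hdw_norm_sq {f : ℝ → ℂ} {d : ℂ} {s : Set ℝ} {x : ℝ} (hf : HasDerivWithinAt f d s x) :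
    HasDerivWithinAt (fun t => ‖f t‖ ^ 2) (2 * (d * (starRingEnd ℂ) (f x)).re) s x := by
  have h := hdw_mul_conj_re hf hf
  have heq : ∀ t, (f t * (starRingEnd ℂ) (f t)).re = ‖f t‖ ^ 2 := by
    intro t
    rw [Complex.mul_conj]
    rw [Complex.ofReal_re, Complex.normSq_eq_norm_sq]
  have h2 : (d * (starRingEnd ℂ) (f x)).re + (f x * (starRingEnd ℂ) d).re
      = 2 * (d * (starRingEnd ℂ) (f x)).re := by
    have : (f x * (starRingEnd ℂ) d) = (starRingEnd ℂ) (d * (starRingEnd ℂ) (f x)) := by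
      simp [mul_comm]
    rw [this, Complex.conj_re]; ring
  rw [h2] at h
  exact h.congr (fun t _ => (heq t).symm) (heq x).symm

set_option maxHeartbeats 2000000 in
lemma stmt6_main (a b θ : ℝ) (ha : 0 < a ^ 2) (hab : a ^ 2 < b ^ 2)
    (hθ0 : 0 ≤ θ) (hθ1 : θ ≤ 1) (ξ : Fin 3 → ℝ)
    (hr1 : Real.sqrt (∑ j, ξ j ^ 2) ≤ 1)
    (u u' u'' : ℝ → Fin 3 → ℂ)
    (hu : ∀ t ∈ Ici (0:ℝ), ∀ i, HasDerivWithinAt (fun s => u s i) (u' t i) (Ici 0) t)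
    (hu' : ∀ t ∈ Ici (0:ℝ), ∀ i, HasDerivWithinAt (fun s => u' s i) (u'' t i) (Ici 0) t)
    (heq : ∀ t ∈ Ici (0:ℝ), ∀ i,
        u'' t i + ((a ^ 2 * ∑ j, ξ j ^ 2 : ℝ) : ℂ) * u t i
          + ((b ^ 2 - a ^ 2 : ℝ) : ℂ) * (∑ j, (ξ j : ℂ) * u t j) * (ξ i : ℂ)
          + ((Real.sqrt (∑ j, ξ j ^ 2) ^ (2 * θ) : ℝ) : ℂ) * u' t i = 0)
    (t : ℝ) (ht : 0 ≤ t) :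
    ((∑ i, ‖u' t i‖ ^ 2) + a ^ 2 * (∑ j, ξ j ^ 2) * ∑ i, ‖u t i‖ ^ 2
        + (b ^ 2 - a ^ 2) * ‖∑ j, (ξ j : ℂ) * u t j‖ ^ 2)
      ≤ 3 * Real.exp (-(min 1 (a ^ 2) / 3 * Real.sqrt (∑ j, ξ j ^ 2) ^ (2 * max (1 - θ) θ) * t))
        * ((∑ i, ‖u' 0 i‖ ^ 2) + a ^ 2 * (∑ j, ξ j ^ 2) * ∑ i, ‖u 0 i‖ ^ 2
          + (b ^ 2 - a ^ 2) * ‖∑ j, (ξ j : ℂ) * u 0 j‖ ^ 2) := by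
  set S : ℝ := ∑ j, ξ j ^ 2 with hSdef
  have hS0 : 0 ≤ S := Finset.sum_nonneg fun _ _ => sq_nonneg _
  set r : ℝ := Real.sqrt S with hrdef
  have hr0 : 0 ≤ r := Real.sqrt_nonneg _
  have hrS : r ^ 2 = S := Real.sq_sqrt hS0
  set σ : ℝ := r ^ (2 * θ) with hσdef
  set γ : ℝ := 2 * max (1 - θ) θ with hγdef
  set q : ℝ := r ^ γ with hqdef
  have hσ0 : 0 ≤ σ := Real.rpow_nonneg hr0 _
  have hq0 : 0 ≤ q := Real.rpow_nonneg hr0 _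
  have hmax1 : 1 - θ ≤ max (1 - θ) θ := le_max_left _ _
  have hmax2 : θ ≤ max (1 - θ) θ := le_max_right _ _
  have hγpos : 0 < γ := by rw [hγdef]; linarith
  have hB : q ≤ σ := by
    rcases eq_or_lt_of_le hr0 with h | h
    · rw [hqdef, ← h, Real.zero_rpow (ne_of_gt hγpos)]; exact hσ0
    · exact Real.rpow_le_rpow_of_exponent_ge h hr1 (by rw [hγdef]; linarith)
  have hA : q * σ ≤ S := by
    rcases eq_or_lt_of_le hr0 with h | h
    · have hS : S = 0 := by rw [← hrS, ← h]; norm_num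
      rw [hqdef, ← h, Real.zero_rpow (ne_of_gt hγpos), zero_mul, hS]
    · rw [hqdef, hσdef, ← Real.rpow_add h, ← hrS]
      calc r ^ (γ + 2 * θ) ≤ r ^ (2 : ℝ) :=
            Real.rpow_le_rpow_of_exponent_ge h hr1 (by rw [hγdef]; linarith)
        _ = r ^ 2 := Real.rpow_two r
  have hC : q * q ≤ S := le_trans (mul_le_mul_of_nonneg_left hB hq0) hA
  set ε₀ : ℝ := min 1 (a ^ 2) with hε₀def
  have hε₀pos : 0 < ε₀ := lt_min one_pos ha
  have hε₀1 : ε₀ ≤ 1 := min_le_left _ _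
  have hε₀a : ε₀ ≤ a ^ 2 := min_le_right _ _
  set Pf : ℝ → ℝ := fun s => ∑ i, ‖u' s i‖ ^ 2 with hPf
  set Uf : ℝ → ℝ := fun s => ∑ i, ‖u s i‖ ^ 2 with hUf
  set Rf : ℝ → ℝ := fun s => ‖∑ j, (ξ j : ℂ) * u s j‖ ^ 2 with hRf
  set Ff : ℝ → ℝ := fun s => ∑ i, (u' s i * (starRingEnd ℂ) (u s i)).re with hFf
  set Ef : ℝ → ℝ := fun s => Pf s + a ^ 2 * S * Uf s + (b ^ 2 - a ^ 2) * Rf s with hEf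
  set Lf : ℝ → ℝ := fun s => Ef s + ε₀ * q * Ff s with hLf
  set Df : ℝ → ℝ := fun s => -(2 * σ * Pf s)
      + ε₀ * q * (Pf s - a ^ 2 * S * Uf s - (b ^ 2 - a ^ 2) * Rf s - σ * Ff s) with hDf
  -- nonnegativity
  have hP0 : ∀ s, 0 ≤ Pf s := fun s => Finset.sum_nonneg fun _ _ => sq_nonneg _
  have hU0 : ∀ s, 0 ≤ Uf s := fun s => Finset.sum_nonneg fun _ _ => sq_nonneg _
  have hR0 : ∀ s, 0 ≤ Rf s := fun s => sq_nonneg _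
  have hE0 : ∀ s, 0 ≤ Ef s := by
    intro s
    have h1 : 0 ≤ a ^ 2 * S * Uf s := mul_nonneg (mul_nonneg ha.le hS0) (hU0 s)
    have h2 : 0 ≤ (b ^ 2 - a ^ 2) * Rf s := mul_nonneg (by linarith) (hR0 s)
    have := hP0 s
    rw [hEf]; dsimp only; linarith
  -- componentwise Cauchy-Schwarz bound for Ff
  have habs : ∀ s, |Ff s| ≤ ∑ i, ‖u' s i‖ * ‖u s i‖ := by
    intro s
    rw [hFf]; dsimp only
    refine (Finset.abs_sum_le_sum_abs _ _).trans (Finset.sum_le_sum ?_)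
    intro i _
    calc |(u' s i * (starRingEnd ℂ) (u s i)).re| ≤ ‖u' s i * (starRingEnd ℂ) (u s i)‖ := by
          exact Complex.abs_re_le_norm _
      _ = ‖u' s i‖ * ‖u s i‖ := by
          rw [norm_mul, Complex.norm_conj]
  have cross1 : ∀ s, ε₀ * q * |Ff s| ≤ ε₀ / 2 * Pf s + ε₀ * (q * q) / 2 * Uf s := by
    intro s
    calc ε₀ * q * |Ff s| ≤ ε₀ * q * ∑ i, ‖u' s i‖ * ‖u s i‖ :=
          mul_le_mul_of_nonneg_left (habs s) (by positivity)
      _ = ∑ i, ε₀ * q * (‖u' s i‖ * ‖u s i‖) := Finset.mul_sum _ _ _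
      _ ≤ ∑ i, (ε₀ / 2 * ‖u' s i‖ ^ 2 + ε₀ * (q * q) / 2 * ‖u s i‖ ^ 2) := by
          refine Finset.sum_le_sum fun i _ => ?_
          nlinarith [sq_nonneg (‖u' s i‖ - q * ‖u s i‖), norm_nonneg (u' s i),
            norm_nonneg (u s i), hε₀pos.le, hq0]
      _ = ε₀ / 2 * Pf s + ε₀ * (q * q) / 2 * Uf s := by
          rw [Finset.sum_add_distrib, ← Finset.mul_sum, ← Finset.mul_sum, hPf, hUf]
  have cross2 : ∀ s, ε₀ * q * σ * |Ff s| ≤ σ / 2 * Pf s + ε₀ * q * (a ^ 2 * S) / 2 * Uf s := by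
    intro s
    have step : ε₀ * q * σ * |Ff s| ≤ σ / 2 * Pf s + ε₀ ^ 2 * (q * q) * σ / 2 * Uf s := by
      calc ε₀ * q * σ * |Ff s| ≤ ε₀ * q * σ * ∑ i, ‖u' s i‖ * ‖u s i‖ :=
            mul_le_mul_of_nonneg_left (habs s) (by positivity)
        _ = ∑ i, ε₀ * q * σ * (‖u' s i‖ * ‖u s i‖) := Finset.mul_sum _ _ _
        _ ≤ ∑ i, (σ / 2 * ‖u' s i‖ ^ 2 + ε₀ ^ 2 * (q * q) * σ / 2 * ‖u s i‖ ^ 2) := by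
            refine Finset.sum_le_sum fun i _ => ?_
            nlinarith [mul_nonneg hσ0 (sq_nonneg (‖u' s i‖ - ε₀ * q * ‖u s i‖)),
              norm_nonneg (u' s i), norm_nonneg (u s i), hε₀pos.le, hq0, hσ0]
        _ = σ / 2 * Pf s + ε₀ ^ 2 * (q * q) * σ / 2 * Uf s := by
            rw [Finset.sum_add_distrib, ← Finset.mul_sum, ← Finset.mul_sum, hPf, hUf]
    have hcoef : ε₀ ^ 2 * (q * q) * σ ≤ ε₀ * q * (a ^ 2 * S) := by
      have h1 : ε₀ * (q * σ) ≤ a ^ 2 * S :=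
        mul_le_mul hε₀a hA (mul_nonneg hq0 hσ0) ha.le
      calc ε₀ ^ 2 * (q * q) * σ = (ε₀ * q) * (ε₀ * (q * σ)) := by ring
        _ ≤ (ε₀ * q) * (a ^ 2 * S) := mul_le_mul_of_nonneg_left h1 (by positivity)
        _ = ε₀ * q * (a ^ 2 * S) := by ring
    have h2 := mul_le_mul_of_nonneg_right hcoef (hU0 s)
    nlinarith [step, h2, hU0 s]
  -- derivatives
  have hEd : ∀ s ∈ Ici (0:ℝ), HasDerivWithinAt Ef (-(2 * σ * Pf s)) (Ici 0) s := by
    intro s hs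
    have hgd : HasDerivWithinAt (fun y => ∑ j, (ξ j : ℂ) * u y j)
        (∑ j, (ξ j : ℂ) * u' s j) (Ici 0) s :=
      HasDerivWithinAt.fun_sum fun j _ => (hu s hs j).const_mul _
    have hPd : HasDerivWithinAt Pf (∑ i, 2 * (u'' s i * (starRingEnd ℂ) (u' s i)).re)
        (Ici 0) s := HasDerivWithinAt.fun_sum fun i _ => hdw_norm_sq (hu' s hs i)
    have hUd : HasDerivWithinAt Uf (∑ i, 2 * (u' s i * (starRingEnd ℂ) (u s i)).re)
        (Ici 0) s := HasDerivWithinAt.fun_sum fun i _ => hdw_norm_sq (hu s hs i)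
    have hRd : HasDerivWithinAt Rf
        (2 * ((∑ j, (ξ j : ℂ) * u' s j) * (starRingEnd ℂ) (∑ j, (ξ j : ℂ) * u s j)).re)
        (Ici 0) s := hdw_norm_sq hgd
    have hu2 : ∀ i, u'' s i = -(((a ^ 2 * S : ℝ) : ℂ) * u s i
        + ((b ^ 2 - a ^ 2 : ℝ) : ℂ) * (∑ j, (ξ j : ℂ) * u s j) * (ξ i : ℂ)
        + ((σ : ℝ) : ℂ) * u' s i) := by
      intro i
      have h := heq s hs i
      linear_combination h
    have hcomb := (hPd.add (hUd.const_mul (a ^ 2 * S))).add (hRd.const_mul (b ^ 2 - a ^ 2))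
    have hval : (∑ i, 2 * (u'' s i * (starRingEnd ℂ) (u' s i)).re)
        + a ^ 2 * S * (∑ i, 2 * (u' s i * (starRingEnd ℂ) (u s i)).re)
        + (b ^ 2 - a ^ 2) *
          (2 * ((∑ j, (ξ j : ℂ) * u' s j) * (starRingEnd ℂ) (∑ j, (ξ j : ℂ) * u s j)).re)
        = -(2 * σ * Pf s) := by
      rw [hPf]; dsimp only
      simp only [Fin.sum_univ_three]
      rw [hu2 0, hu2 1, hu2 2]
      simp only [Fin.sum_univ_three]
      simp only [Complex.mul_re, Complex.mul_im, Complex.add_re, Complex.add_im,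
        Complex.neg_re, Complex.neg_im, Complex.ofReal_re, Complex.ofReal_im,
        Complex.conj_re, Complex.conj_im, ← Complex.normSq_eq_norm_sq,
        Complex.normSq_apply]
      ring
    rw [← hval]
    exact hcomb
  have hFd : ∀ s ∈ Ici (0:ℝ), HasDerivWithinAt Ff
      (Pf s - a ^ 2 * S * Uf s - (b ^ 2 - a ^ 2) * Rf s - σ * Ff s) (Ici 0) s := by
    intro s hs
    have hFdd : HasDerivWithinAt Ff
        (∑ i, ((u'' s i * (starRingEnd ℂ) (u s i)).re
          + (u' s i * (starRingEnd ℂ) (u' s i)).re)) (Ici 0) s :=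
      HasDerivWithinAt.fun_sum fun i _ => hdw_mul_conj_re (hu' s hs i) (hu s hs i)
    have hu2 : ∀ i, u'' s i = -(((a ^ 2 * S : ℝ) : ℂ) * u s i
        + ((b ^ 2 - a ^ 2 : ℝ) : ℂ) * (∑ j, (ξ j : ℂ) * u s j) * (ξ i : ℂ)
        + ((σ : ℝ) : ℂ) * u' s i) := by
      intro i
      have h := heq s hs i
      linear_combination h
    have hval : (∑ i, ((u'' s i * (starRingEnd ℂ) (u s i)).re
          + (u' s i * (starRingEnd ℂ) (u' s i)).re))
        = Pf s - a ^ 2 * S * Uf s - (b ^ 2 - a ^ 2) * Rf s - σ * Ff s := by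
      rw [hPf, hUf, hRf, hFf]; dsimp only
      simp only [Fin.sum_univ_three]
      rw [hu2 0, hu2 1, hu2 2]
      simp only [Fin.sum_univ_three]
      simp only [Complex.mul_re, Complex.mul_im, Complex.add_re, Complex.add_im,
        Complex.neg_re, Complex.neg_im, Complex.ofReal_re, Complex.ofReal_im,
        Complex.conj_re, Complex.conj_im, ← Complex.normSq_eq_norm_sq,
        Complex.normSq_apply]
      ring
    rw [← hval]
    exact hFdd
  have hLd : ∀ s ∈ Ici (0:ℝ), HasDerivWithinAt Lf (Df s) (Ici 0) s := by
    intro s hs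
    have h := (hEd s hs).add ((hFd s hs).const_mul (ε₀ * q))
    have hval : Df s = -(2 * σ * Pf s)
        + ε₀ * q * (Pf s - a ^ 2 * S * Uf s - (b ^ 2 - a ^ 2) * Rf s - σ * Ff s) := by
      rw [hDf]
    rw [hval]
    exact h
  -- equations, then make the definitions opaque
  have hEfs : ∀ s, Ef s = Pf s + a ^ 2 * S * Uf s + (b ^ 2 - a ^ 2) * Rf s :=
    fun s => by rw [hEf]
  have hLfs : ∀ s, Lf s = Ef s + ε₀ * q * Ff s := fun s => by rw [hLf]
  have hDfs : ∀ s, Df s = -(2 * σ * Pf s)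
      + ε₀ * q * (Pf s - a ^ 2 * S * Uf s - (b ^ 2 - a ^ 2) * Rf s - σ * Ff s) :=
    fun s => by rw [hDf]
  have goalEq : ((∑ i, ‖u' t i‖ ^ 2) + a ^ 2 * S * ∑ i, ‖u t i‖ ^ 2
      + (b ^ 2 - a ^ 2) * ‖∑ j, (ξ j : ℂ) * u t j‖ ^ 2) = Ef t := by
    rw [hEf, hPf, hUf, hRf]
  have goalEq0 : ((∑ i, ‖u' 0 i‖ ^ 2) + a ^ 2 * S * ∑ i, ‖u 0 i‖ ^ 2
      + (b ^ 2 - a ^ 2) * ‖∑ j, (ξ j : ℂ) * u 0 j‖ ^ 2) = Ef 0 := by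
    rw [hEf, hPf, hUf, hRf]
  clear_value S r σ γ q ε₀ Pf Uf Rf Ff Ef Lf Df
  -- arithmetic part
  have hε₀q : (0:ℝ) ≤ ε₀ * q := mul_nonneg hε₀pos.le hq0
  have comp : ∀ s, ε₀ * q * |Ff s| ≤ 1 / 2 * Ef s := by
    intro s
    have h1 := cross1 s
    have h2 : ε₀ / 2 * Pf s ≤ 1 / 2 * Pf s :=
      mul_le_mul_of_nonneg_right (by linarith) (hP0 s)
    have h3 : ε₀ * (q * q) ≤ a ^ 2 * S := mul_le_mul hε₀a hC (mul_nonneg hq0 hq0) ha.le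
    have h4 : ε₀ * (q * q) / 2 * Uf s ≤ a ^ 2 * S / 2 * Uf s :=
      mul_le_mul_of_nonneg_right (by linarith) (hU0 s)
    have h5 : 0 ≤ (b ^ 2 - a ^ 2) * Rf s := mul_nonneg (by linarith) (hR0 s)
    rw [hEfs]; linarith
  have hsignF : ∀ s, -(ε₀ * q * |Ff s|) ≤ ε₀ * q * Ff s ∧ ε₀ * q * Ff s ≤ ε₀ * q * |Ff s| := by
    intro s
    constructor
    · have := mul_le_mul_of_nonneg_left (neg_abs_le (Ff s)) hε₀q
      nlinarith [this]
    · exact mul_le_mul_of_nonneg_left (le_abs_self _) hε₀q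
  have hcomp1 : ∀ s, Ef s ≤ 2 * Lf s := by
    intro s
    have h1 := comp s
    have h2 := (hsignF s).1
    rw [hLfs]; linarith
  have hcomp2 : ∀ s, Lf s ≤ 3 / 2 * Ef s := by
    intro s
    have h1 := comp s
    have h2 := (hsignF s).2
    rw [hLfs]; linarith
  -- decay inequality
  set k : ℝ := ε₀ / 3 * q with hkdef
  have hk0 : 0 ≤ k := mul_nonneg (div_nonneg hε₀pos.le (by norm_num)) hq0
  have hDec : ∀ s, Df s + k * Lf s ≤ 0 := by
    intro s
    have t1 : ε₀ * q * Pf s ≤ σ * Pf s := by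
      have h0 : ε₀ * q ≤ q := by nlinarith [hq0]
      have : ε₀ * q ≤ σ := le_trans h0 hB
      exact mul_le_mul_of_nonneg_right this (hP0 s)
    have t2 := cross2 s
    have t3 : -(ε₀ * q * (σ * Ff s)) ≤ ε₀ * q * σ * |Ff s| := by
      have h := mul_le_mul_of_nonneg_left (neg_abs_le (Ff s))
        (mul_nonneg hε₀q hσ0)
      nlinarith [h]
    have t5 : 0 ≤ ε₀ * q * ((b ^ 2 - a ^ 2) * Rf s) :=
      mul_nonneg hε₀q (mul_nonneg (by linarith) (hR0 s))
    have hE2 : Df s ≤ -(ε₀ * q / 2) * Ef s := by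
      rw [hDfs, hEfs]
      nlinarith [t1, t2, t3, t5]
    have hL3 : k * Lf s ≤ ε₀ * q / 2 * Ef s := by
      have h1 : k * Lf s ≤ k * (3 / 2 * Ef s) := by
        rcases le_or_gt (Lf s) (3 / 2 * Ef s) with h | h
        · exact mul_le_mul_of_nonneg_left h hk0
        · linarith [hcomp2 s]
      have h2 : k * (3 / 2 * Ef s) = ε₀ / 2 * q * Ef s := by rw [hkdef]; ring
      nlinarith [h1, h2]
    linarith [hE2, hL3]
  clear_value k
  -- Gronwall via antitone
  have hGd : ∀ s ∈ Ici (0:ℝ),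
      HasDerivWithinAt (fun y => Lf y * Real.exp (k * y))
        ((Df s + k * Lf s) * Real.exp (k * s)) (Ici 0) s := by
    intro s hs
    have hexp : HasDerivAt (fun y => Real.exp (k * y)) (Real.exp (k * s) * k) s := by
      have h1 : HasDerivAt (fun y : ℝ => k * y) k s := by
        simpa using (hasDerivAt_id s).const_mul k
      simpa using h1.exp
    have h := (hLd s hs).mul hexp.hasDerivWithinAt
    have hval : Df s * Real.exp (k * s) + Lf s * (Real.exp (k * s) * k)
        = (Df s + k * Lf s) * Real.exp (k * s) := by ring
    rw [← hval]
    exact h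
  have hcont : ContinuousOn (fun y => Lf y * Real.exp (k * y)) (Ici 0) :=
    fun s hs => (hGd s hs).continuousWithinAt
  have hdiff : DifferentiableOn ℝ (fun y => Lf y * Real.exp (k * y))
      (interior (Ici (0:ℝ))) := by
    rw [interior_Ici]
    intro s hs
    exact (((hGd s (Set.mem_Ici.mpr (le_of_lt hs))).hasDerivAt (Ici_mem_nhds hs)).differentiableAt).differentiableWithinAt
  have hderiv : ∀ s ∈ interior (Ici (0:ℝ)),
      deriv (fun y => Lf y * Real.exp (k * y)) s ≤ 0 := by
    rw [interior_Ici]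
    intro s hs
    have hd := (hGd s (Set.mem_Ici.mpr (le_of_lt hs))).hasDerivAt (Ici_mem_nhds hs)
    rw [hd.deriv]
    exact mul_nonpos_iff.mpr (Or.inr ⟨hDec s, Real.exp_nonneg _⟩)
  have hanti : AntitoneOn (fun y => Lf y * Real.exp (k * y)) (Ici (0:ℝ)) :=
    antitoneOn_of_deriv_nonpos (convex_Ici 0) hcont hdiff hderiv
  have hGle := hanti (le_refl (0:ℝ)) ht ht
  have hGt : Lf t * Real.exp (k * t) ≤ Lf 0 := by simpa using hGle
  -- conclude
  have hepos : 0 < Real.exp (-(k * t)) := Real.exp_pos _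
  have hprod : Real.exp (k * t) * Real.exp (-(k * t)) = 1 := by
    rw [← Real.exp_add]; simp
  have hLt : Lf t ≤ Lf 0 * Real.exp (-(k * t)) := by
    have h := mul_le_mul_of_nonneg_right hGt hepos.le
    calc Lf t = Lf t * (Real.exp (k * t) * Real.exp (-(k * t))) := by rw [hprod, mul_one]
      _ = Lf t * Real.exp (k * t) * Real.exp (-(k * t)) := by ring
      _ ≤ Lf 0 * Real.exp (-(k * t)) := h
  have final : Ef t ≤ 3 * Real.exp (-(k * t)) * Ef 0 := by
    have h1 := hcomp1 t
    have h2 := hcomp2 0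
    have h3 : Lf 0 * Real.exp (-(k * t)) ≤ 3 / 2 * Ef 0 * Real.exp (-(k * t)) :=
      mul_le_mul_of_nonneg_right h2 hepos.le
    nlinarith [hLt, h1, h3]
  rw [goalEq, goalEq0]
  exact final

theorem stmt6 (a b θ ε : ℝ) (ha : 0 < a ^ 2) (hab : a ^ 2 < b ^ 2)
    (hθ : θ ∈ Icc (0 : ℝ) 1) (hε : ε ∈ Ioc (0 : ℝ) 1) :
    ∃ c > (0 : ℝ), ∀ (ξ : Fin 3 → ℝ), Real.sqrt (∑ j, ξ j ^ 2) ≤ ε →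
      ∀ (u u' u'' : ℝ → Fin 3 → ℂ),
      (∀ t ∈ Ici (0 : ℝ), ∀ i, HasDerivWithinAt (fun s => u s i) (u' t i) (Ici 0) t) →
      (∀ t ∈ Ici (0 : ℝ), ∀ i, HasDerivWithinAt (fun s => u' s i) (u'' t i) (Ici 0) t) →
      (∀ t ∈ Ici (0 : ℝ), ∀ i,
        u'' t i + ((a ^ 2 * ∑ j, ξ j ^ 2 : ℝ) : ℂ) * u t i
          + ((b ^ 2 - a ^ 2 : ℝ) : ℂ) * (∑ j, (ξ j : ℂ) * u t j) * (ξ i : ℂ)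
          + ((Real.sqrt (∑ j, ξ j ^ 2) ^ (2 * θ) : ℝ) : ℂ) * u' t i = 0) →
      let E : ℝ → ℝ := fun s =>
        (∑ i, ‖u' s i‖ ^ 2) + a ^ 2 * (∑ j, ξ j ^ 2) * ∑ i, ‖u s i‖ ^ 2
          + (b ^ 2 - a ^ 2) * ‖∑ j, (ξ j : ℂ) * u s j‖ ^ 2
      ∀ t : ℝ, 0 ≤ t →
        E t ≤ 3 * Real.exp (-(c * Real.sqrt (∑ j, ξ j ^ 2) ^ (2 * max (1 - θ) θ) * t)) * E 0 := by
  refine ⟨min 1 (a ^ 2) / 3, by positivity, ?_⟩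
  intro ξ hξ u u' u'' hu hu' heq E t ht
  exact stmt6_main a b θ ha hab hθ.1 hθ.2 ξ (hξ.trans hε.2) u u' u'' hu hu' heq t ht
end

section
/- Fix ξ ∈ ℝ³ with ε ≤ |ξ| for some ε > 0, θ ∈ [0,1], and b² > a² > 0. Let û solve û'' + a²|ξ|²û + (b²−a²)(ξ·û)ξ + |ξ|^{2θ}û' = 0 with energy E(t) = |û'(t)|² + a²|ξ|²|û(t)|² + (b²−a²)|ξ·û(t)|². Then there exists a constant c > 0, depending only on ε, a, b, θ, such that E(t) ≤ 3 e^{−ct} E(0) for all t ≥ 0. -/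
open Set

lemma aux_abs_le {x y : ℝ} (hy : 0 ≤ y) (h : x^2 ≤ y^2) : |x| ≤ y := by
  have h2 := Real.sqrt_le_sqrt h
  rwa [Real.sqrt_sq_eq_abs, Real.sqrt_sq hy] at h2

lemma aux_normsq_deriv {f : ℝ → ℂ} {f' : ℂ} {s : Set ℝ} {x : ℝ}
    (hf : HasDerivWithinAt f f' s x) :
    HasDerivWithinAt (fun t => ‖f t‖^2) (2 * (inner ℝ f' (f x) : ℝ)) s x := by
  have h := hf.inner (𝕜 := ℝ) hf
  simp only [real_inner_self_eq_norm_sq] at h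
  convert h using 1
  · rfl
  · rfl
  rw [real_inner_comm (f x) f']; ring

lemma aux_pair (m bb d : ℝ) (ui ui' ui'' S w : ℂ) (xi : ℝ)
    (heq : ui'' + (m : ℂ) * ui + (bb : ℂ) * S * (xi : ℂ) + (d : ℂ) * ui' = 0) :
    (inner ℝ ui'' w : ℝ)
      = -(m * (inner ℝ ui w : ℝ)) - bb * (xi * (inner ℝ S w : ℝ)) - d * (inner ℝ ui' w : ℝ) := by
  have hre := congrArg Complex.re heq
  have him := congrArg Complex.im heq
  simp only [Complex.add_re, Complex.add_im, Complex.mul_re, Complex.mul_im,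
    Complex.ofReal_re, Complex.ofReal_im, Complex.zero_re, Complex.zero_im] at hre him
  simp [Complex.inner]
  linear_combination w.re * hre + w.im * him

lemma aux_sumxi (ξ : Fin 3 → ℝ) (v : Fin 3 → ℂ) (w : ℂ) :
    ∑ i, ξ i * (inner ℝ w (v i) : ℝ) = (inner ℝ w (∑ i, (ξ i : ℂ) * v i) : ℝ) := by
  rw [inner_sum]
  refine Finset.sum_congr rfl fun i _ => ?_
  rw [← Complex.real_smul, real_inner_smul_right]

lemma aux_gronwall (α : ℝ) (F F' : ℝ → ℝ)
    (hFd : ∀ t ∈ Ici (0:ℝ), HasDerivWithinAt F (F' t) (Ici 0) t)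
    (hineq : ∀ t ∈ Ici (0:ℝ), α * F t + F' t ≤ 0) :
    ∀ t, 0 ≤ t → F t ≤ Real.exp (-(α*t)) * F 0 := by
  set h : ℝ → ℝ := fun s => Real.exp (α*s) * F s with hdef
  have hhd : ∀ t ∈ Ici (0:ℝ),
      HasDerivWithinAt h (Real.exp (α*t) * (α * F t + F' t)) (Ici 0) t := by
    intro t ht
    have hexp : HasDerivWithinAt (fun s => Real.exp (α*s)) (Real.exp (α*t) * α) (Ici 0) t := by
      exact (Real.hasDerivAt_exp (α*t)).comp t
        (by simpa using (hasDerivAt_id t).const_mul α) |>.hasDerivWithinAt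
    have := hexp.mul (hFd t ht)
    convert this using 1
    · rfl
    · rfl
    · rfl
    ring
  have hmono : AntitoneOn h (Ici 0) := by
    apply antitoneOn_of_deriv_nonpos (convex_Ici 0)
    · exact fun t ht => (hhd t ht).continuousWithinAt
    · intro x hx
      rw [interior_Ici] at hx
      exact ((hhd x (show (0:ℝ) ≤ x from hx.le)).hasDerivAt (Ici_mem_nhds hx)).differentiableAt.differentiableWithinAt
    · intro x hx
      rw [interior_Ici] at hx
      rw [((hhd x (show (0:ℝ) ≤ x from hx.le)).hasDerivAt (Ici_mem_nhds hx)).deriv]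
      have := hineq x (show (0:ℝ) ≤ x from hx.le)
      nlinarith [Real.exp_pos (α*x)]
  intro t ht
  have h1 : h t ≤ h 0 := hmono self_mem_Ici ht ht
  have h2 : h 0 = F 0 := by simp [hdef]
  rw [h2] at h1
  have h3 : Real.exp (-(α*t)) * (Real.exp (α*t) * F t) ≤ Real.exp (-(α*t)) * F 0 :=
    mul_le_mul_of_nonneg_left h1 (Real.exp_nonneg _)
  calc F t = Real.exp (-(α*t)) * (Real.exp (α*t) * F t) := by
        rw [← mul_assoc, ← Real.exp_add]; simp
    _ ≤ Real.exp (-(α*t)) * F 0 := h3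


set_option maxHeartbeats 1000000 in
theorem stmt7 (a b θ ε : ℝ) (ha : 0 < a ^ 2) (hab : a ^ 2 < b ^ 2)
    (hθ : θ ∈ Icc (0 : ℝ) 1) (hε : 0 < ε) :
    ∃ c > (0 : ℝ), ∀ (ξ : Fin 3 → ℝ), ε ≤ Real.sqrt (∑ j, ξ j ^ 2) →
      ∀ (u u' u'' : ℝ → Fin 3 → ℂ),
      (∀ t ∈ Ici (0 : ℝ), ∀ i, HasDerivWithinAt (fun s => u s i) (u' t i) (Ici 0) t) →
      (∀ t ∈ Ici (0 : ℝ), ∀ i, HasDerivWithinAt (fun s => u' s i) (u'' t i) (Ici 0) t) →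
      (∀ t ∈ Ici (0 : ℝ), ∀ i,
        u'' t i + ((a ^ 2 * ∑ j, ξ j ^ 2 : ℝ) : ℂ) * u t i
          + ((b ^ 2 - a ^ 2 : ℝ) : ℂ) * (∑ j, (ξ j : ℂ) * u t j) * (ξ i : ℂ)
          + ((Real.sqrt (∑ j, ξ j ^ 2) ^ (2 * θ) : ℝ) : ℂ) * u' t i = 0) →
      let E : ℝ → ℝ := fun s =>
        (∑ i, ‖u' s i‖ ^ 2) + a ^ 2 * (∑ j, ξ j ^ 2) * ∑ i, ‖u s i‖ ^ 2
          + (b ^ 2 - a ^ 2) * ‖∑ j, (ξ j : ℂ) * u s j‖ ^ 2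
      ∀ t : ℝ, 0 ≤ t → E t ≤ 3 * Real.exp (-(c * t)) * E 0 := by
  refine ⟨min 1 (a^2) * min 1 (ε^2) / 3, by positivity, ?_⟩
  intro ξ hξ u u' u'' hu hu' heq E
  set ρ : ℝ := ∑ j, ξ j ^ 2 with hρdef
  have hρ0 : (0:ℝ) ≤ ρ := Finset.sum_nonneg fun j _ => sq_nonneg _
  have hρpos : 0 < ρ := Real.sqrt_pos.mp (lt_of_lt_of_le hε hξ)
  have hε2ρ : ε^2 ≤ ρ := by
    calc ε^2 ≤ (Real.sqrt ρ)^2 := pow_le_pow_left₀ hε.le hξ 2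
      _ = ρ := Real.sq_sqrt hρ0
  set δ : ℝ := Real.sqrt ρ ^ (2*θ) with hδdef
  have hδrpow : δ = ρ ^ θ := by
    rw [hδdef, Real.sqrt_eq_rpow, ← Real.rpow_mul hρ0, show (1/2:ℝ)*(2*θ) = θ by ring]
  have hδpos : 0 < δ := by rw [hδrpow]; exact Real.rpow_pos_of_pos hρpos θ
  set m : ℝ := a^2 * ρ with hmdef
  have hmpos : 0 < m := mul_pos ha hρpos
  set α : ℝ := min δ (m/δ) with hαdef
  have hαpos : 0 < α := lt_min hδpos (div_pos hmpos hδpos)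
  have hαδ : α ≤ δ := min_le_left _ _
  have hαδm : α * δ ≤ m := by
    have h1 : α ≤ m/δ := min_le_right _ _
    calc α * δ ≤ (m/δ) * δ := by gcongr
      _ = m := div_mul_cancel₀ m hδpos.ne'
  have hα2 : α^2 ≤ m := by nlinarith
  have hcα : min 1 (a^2) * min 1 (ε^2) ≤ α := by
    have key : ∀ s : ℝ, 0 ≤ s → s ≤ 1 → min 1 (ε^2) ≤ ρ ^ s := by
      intro s hs0 hs1
      rcases le_total 1 ρ with h | h
      · refine le_trans (min_le_left _ _) ?_
        calc (1:ℝ) = ρ ^ (0:ℝ) := (Real.rpow_zero ρ).symm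
          _ ≤ ρ ^ s := Real.rpow_le_rpow_of_exponent_le h hs0
      · refine le_trans (min_le_right _ _) ?_
        calc ε^2 ≤ ρ := hε2ρ
          _ = ρ ^ (1:ℝ) := (Real.rpow_one ρ).symm
          _ ≤ ρ ^ s := Real.rpow_le_rpow_of_exponent_ge hρpos h hs1
    rw [hαdef]
    refine le_min ?_ ?_
    · rw [hδrpow]
      calc min 1 (a^2) * min 1 (ε^2) ≤ 1 * (ρ ^ θ) := by
            apply mul_le_mul (min_le_left _ _) (key θ hθ.1 hθ.2) (by positivity) one_pos.le
        _ = ρ ^ θ := one_mul _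
    · have hmd : m / δ = a^2 * ρ ^ (1-θ) := by
        rw [hmdef, hδrpow, mul_div_assoc]
        congr 1
        rw [Real.rpow_sub hρpos, Real.rpow_one]
      rw [hmd]
      apply mul_le_mul (min_le_right _ _) (key (1-θ) (by linarith [hθ.2]) (by linarith [hθ.1]))
        (by positivity) ha.le
  have hb2 : (0:ℝ) < b^2 - a^2 := by linarith
  set P : ℝ → ℝ := fun s => ∑ i, ‖u' s i‖^2 with hPdef
  set Q : ℝ → ℝ := fun s => ∑ i, ‖u s i‖^2 with hQdef
  set Sc : ℝ → ℂ := fun s => ∑ j, (ξ j : ℂ) * u s j with hScdef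
  set Sc' : ℝ → ℂ := fun s => ∑ j, (ξ j : ℂ) * u' s j with hSc'def
  set R : ℝ → ℝ := fun s => ‖Sc s‖^2 with hRdef
  set G : ℝ → ℝ := fun s => ∑ i, (inner ℝ (u' s i) (u s i) : ℝ) with hGdef
  have hEeq : ∀ s, E s = P s + m * Q s + (b^2-a^2) * R s := fun s => rfl
  have hPn : ∀ s, 0 ≤ P s := fun s => Finset.sum_nonneg fun i _ => by positivity
  have hQn : ∀ s, 0 ≤ Q s := fun s => Finset.sum_nonneg fun i _ => by positivity
  have hRn : ∀ s, 0 ≤ R s := fun s => by positivity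
  have hCS : ∀ s, (G s)^2 ≤ P s * Q s := by
    intro s
    have h1 : |G s| ≤ ∑ i, ‖u' s i‖ * ‖u s i‖ := by
      refine (Finset.abs_sum_le_sum_abs _ _).trans (Finset.sum_le_sum fun i _ => ?_)
      exact abs_real_inner_le_norm _ _
    calc (G s)^2 = |G s|^2 := (sq_abs _).symm
      _ ≤ (∑ i, ‖u' s i‖ * ‖u s i‖)^2 := pow_le_pow_left₀ (abs_nonneg _) h1 2
      _ ≤ (∑ i, ‖u' s i‖^2) * ∑ i, ‖u s i‖^2 := Finset.sum_mul_sq_le_sq_mul_sq _ _ _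
  have hG2 : ∀ s, 2*α*|G s| ≤ P s + m * Q s := by
    intro s
    have habs : |2*α*G s| ≤ P s + m*Q s := by
      apply aux_abs_le (add_nonneg (hPn s) (mul_nonneg hmpos.le (hQn s)))
      linarith [sq_nonneg (P s - m*Q s),
        mul_nonneg (mul_nonneg (by norm_num : (0:ℝ) ≤ 4) (sub_nonneg.2 hα2))
          (mul_nonneg (hPn s) (hQn s)),
        mul_nonneg (by positivity : (0:ℝ) ≤ 4*α^2) (sub_nonneg.2 (hCS s))]
    calc 2*α*|G s| = |2*α*G s| := by
          rw [abs_mul, abs_of_nonneg (by positivity : (0:ℝ) ≤ 2*α)]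
      _ ≤ _ := habs
  have hGcross : ∀ s, 2*(α*δ)*|G s| ≤ δ * P s + α * m * Q s := by
    intro s
    have habs : |2*(α*δ)*G s| ≤ δ * P s + α * m * Q s := by
      apply aux_abs_le (add_nonneg (mul_nonneg hδpos.le (hPn s))
        (mul_nonneg (mul_nonneg hαpos.le hmpos.le) (hQn s)))
      linarith [sq_nonneg (δ*P s - α*m*Q s),
        mul_nonneg (mul_nonneg (by positivity : (0:ℝ) ≤ 4*α*δ) (sub_nonneg.2 hαδm))
          (mul_nonneg (hPn s) (hQn s)),
        mul_nonneg (by positivity : (0:ℝ) ≤ 4*α^2*δ^2) (sub_nonneg.2 (hCS s))]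
    calc 2*(α*δ)*|G s| = |2*(α*δ)*G s| := by
          rw [abs_mul, abs_of_nonneg (by positivity : (0:ℝ) ≤ 2*(α*δ))]
      _ ≤ _ := habs
  have hSd : ∀ t ∈ Ici (0:ℝ), HasDerivWithinAt Sc (Sc' t) (Ici 0) t := fun t ht =>
    HasDerivWithinAt.fun_sum fun j _ => (hu t ht j).const_mul _
  set Fv : ℝ → ℝ := fun s => P s + m*Q s + (b^2-a^2)*R s + α * G s with hFdef
  set Dv : ℝ → ℝ :=
    fun t => -(2*δ)*P t + α*(P t - (m*Q t + (b^2-a^2)*R t + δ*G t)) with hDdef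
  have hFd : ∀ t ∈ Ici (0:ℝ), HasDerivWithinAt Fv (Dv t) (Ici 0) t := by
    intro t ht
    have hPd : HasDerivWithinAt P (∑ i, 2*(inner ℝ (u'' t i) (u' t i):ℝ)) (Ici 0) t :=
      HasDerivWithinAt.fun_sum fun i _ => aux_normsq_deriv (hu' t ht i)
    have hQd : HasDerivWithinAt Q (∑ i, 2*(inner ℝ (u' t i) (u t i):ℝ)) (Ici 0) t :=
      HasDerivWithinAt.fun_sum fun i _ => aux_normsq_deriv (hu t ht i)
    have hRd : HasDerivWithinAt R (2*(inner ℝ (Sc' t) (Sc t):ℝ)) (Ici 0) t :=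
      aux_normsq_deriv (hSd t ht)
    have hGd : HasDerivWithinAt G
        (∑ i, ((inner ℝ (u' t i) (u' t i):ℝ) + (inner ℝ (u'' t i) (u t i):ℝ))) (Ici 0) t :=
      HasDerivWithinAt.fun_sum fun i _ => (hu' t ht i).inner (𝕜:=ℝ) (hu t ht i)
    have key1 : ∑ i, (inner ℝ (u'' t i) (u' t i):ℝ)
        = -(m * G t) - (b^2-a^2) * (inner ℝ (Sc t) (Sc' t):ℝ) - δ * P t := by
      have h1 : ∀ i, (inner ℝ (u'' t i) (u' t i):ℝ)
          = -(m*(inner ℝ (u t i) (u' t i):ℝ)) - (b^2-a^2)*(ξ i*(inner ℝ (Sc t) (u' t i):ℝ))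
            - δ*(inner ℝ (u' t i) (u' t i):ℝ) :=
        fun i => aux_pair m (b^2-a^2) δ (u t i) (u' t i) (u'' t i) (Sc t) (u' t i) (ξ i)
          (heq t ht i)
      have e2 : ∑ i, (inner ℝ (u t i) (u' t i):ℝ) = G t :=
        Finset.sum_congr rfl fun i _ => real_inner_comm _ _
      have e3 : ∑ i, ξ i * (inner ℝ (Sc t) (u' t i):ℝ) = (inner ℝ (Sc t) (Sc' t):ℝ) :=
        aux_sumxi ξ (fun i => u' t i) (Sc t)
      have e4 : ∑ i, (inner ℝ (u' t i) (u' t i):ℝ) = P t :=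
        Finset.sum_congr rfl fun i _ => real_inner_self_eq_norm_sq _
      calc ∑ i, (inner ℝ (u'' t i) (u' t i):ℝ)
          = ∑ i, (-(m*(inner ℝ (u t i) (u' t i):ℝ))
              - (b^2-a^2)*(ξ i*(inner ℝ (Sc t) (u' t i):ℝ))
              - δ*(inner ℝ (u' t i) (u' t i):ℝ)) := Finset.sum_congr rfl fun i _ => h1 i
        _ = -(m * ∑ i, (inner ℝ (u t i) (u' t i):ℝ))
              - (b^2-a^2)*(∑ i, ξ i*(inner ℝ (Sc t) (u' t i):ℝ))
              - δ*(∑ i, (inner ℝ (u' t i) (u' t i):ℝ)) := by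
            simp [Finset.sum_sub_distrib, Finset.mul_sum]
        _ = _ := by rw [e2, e3, e4]
    have key2 : ∑ i, (inner ℝ (u'' t i) (u t i):ℝ)
        = -(m * Q t) - (b^2-a^2) * R t - δ * G t := by
      have h1 : ∀ i, (inner ℝ (u'' t i) (u t i):ℝ)
          = -(m*(inner ℝ (u t i) (u t i):ℝ)) - (b^2-a^2)*(ξ i*(inner ℝ (Sc t) (u t i):ℝ))
            - δ*(inner ℝ (u' t i) (u t i):ℝ) :=
        fun i => aux_pair m (b^2-a^2) δ (u t i) (u' t i) (u'' t i) (Sc t) (u t i) (ξ i)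
          (heq t ht i)
      have e2 : ∑ i, (inner ℝ (u t i) (u t i):ℝ) = Q t :=
        Finset.sum_congr rfl fun i _ => real_inner_self_eq_norm_sq _
      have e3 : ∑ i, ξ i * (inner ℝ (Sc t) (u t i):ℝ) = R t := by
        rw [aux_sumxi ξ (fun i => u t i) (Sc t)]
        exact real_inner_self_eq_norm_sq _
      have e4 : ∑ i, (inner ℝ (u' t i) (u t i):ℝ) = G t := rfl
      calc ∑ i, (inner ℝ (u'' t i) (u t i):ℝ)
          = ∑ i, (-(m*(inner ℝ (u t i) (u t i):ℝ))
              - (b^2-a^2)*(ξ i*(inner ℝ (Sc t) (u t i):ℝ))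
              - δ*(inner ℝ (u' t i) (u t i):ℝ)) := Finset.sum_congr rfl fun i _ => h1 i
        _ = -(m * ∑ i, (inner ℝ (u t i) (u t i):ℝ))
              - (b^2-a^2)*(∑ i, ξ i*(inner ℝ (Sc t) (u t i):ℝ))
              - δ*(∑ i, (inner ℝ (u' t i) (u t i):ℝ)) := by
            simp [Finset.sum_sub_distrib, Finset.mul_sum]
        _ = _ := by rw [e2, e3, e4]
    have hcomb := ((hPd.add (hQd.const_mul m)).add (hRd.const_mul (b^2-a^2))).add
      (hGd.const_mul α)
    have e5 : ∑ i, 2*(inner ℝ (u' t i) (u t i):ℝ) = 2 * G t := by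
      rw [← Finset.mul_sum]
    have e6 : ∑ i, 2*(inner ℝ (u'' t i) (u' t i):ℝ) = 2 * ∑ i, (inner ℝ (u'' t i) (u' t i):ℝ) := by
      rw [← Finset.mul_sum]
    have e7 : ∑ i, ((inner ℝ (u' t i) (u' t i):ℝ) + (inner ℝ (u'' t i) (u t i):ℝ))
        = P t + ∑ i, (inner ℝ (u'' t i) (u t i):ℝ) := by
      rw [Finset.sum_add_distrib]
      congr 1
      exact Finset.sum_congr rfl fun i _ => real_inner_self_eq_norm_sq _
    rw [e5, e6, e7, key1, key2] at hcomb
    convert hcomb using 1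
    · rfl
    · rfl
    · rfl
    rw [hDdef]
    rw [real_inner_comm (Sc' t) (Sc t)]
    ring
  have hineq : ∀ t ∈ Ici (0:ℝ), (α/3) * Fv t + Dv t ≤ 0 := by
    intro t _
    have h1 := hGcross t
    have h2 := hPn t
    have h3 := hQn t
    have h4 := mul_nonneg hb2.le (hRn t)
    have h5 : (α*δ - α^2/3) * (|G t| + G t) ≥ 0 :=
      mul_nonneg (by nlinarith) (by linarith [neg_abs_le (G t)])
    have h6 : α^2/3 * G t - α*δ*G t ≤ α*δ*|G t| := by
      nlinarith [h5, mul_nonneg (by positivity : (0:ℝ) ≤ α^2/3) (abs_nonneg (G t))]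
    rw [hFdef, hDdef]
    simp only
    nlinarith [h6, h1, mul_nonneg (sub_nonneg.2 hαδ) h2, mul_nonneg hδpos.le h2,
      mul_nonneg (mul_nonneg hαpos.le hmpos.le) h3, mul_nonneg hαpos.le h4]
  have hdecay := aux_gronwall (α/3) Fv Dv hFd hineq
  intro t ht
  rw [hEeq t, hEeq 0]
  have hd := hdecay t ht
  have hF0 : Fv 0 ≤ 3/2 * (P 0 + m*Q 0 + (b^2-a^2)*R 0) := by
    have h5 : 0 ≤ α * (|G 0| - G 0) := mul_nonneg hαpos.le (by linarith [le_abs_self (G 0)])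
    have := hG2 0
    rw [hFdef]; simp only
    nlinarith [mul_nonneg hb2.le (hRn 0)]
  have hEt : P t + m*Q t + (b^2-a^2)*R t ≤ 2 * Fv t := by
    have h5 : 0 ≤ α * (G t + |G t|) := mul_nonneg hαpos.le (by linarith [neg_abs_le (G t)])
    have := hG2 t
    rw [hFdef]; simp only
    nlinarith [mul_nonneg hb2.le (hRn t)]
  have hE0n : 0 ≤ P 0 + m*Q 0 + (b^2-a^2)*R 0 := by
    have := mul_nonneg hmpos.le (hQn 0)
    have := mul_nonneg hb2.le (hRn 0)
    linarith [hPn 0]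
  have hexple : Real.exp (-(α/3*t)) ≤ Real.exp (-(min 1 (a^2) * min 1 (ε^2) / 3 * t)) := by
    apply Real.exp_le_exp.mpr
    have : min 1 (a^2) * min 1 (ε^2) / 3 * t ≤ α/3 * t :=
      mul_le_mul_of_nonneg_right (by linarith) ht
    linarith
  calc P t + m*Q t + (b^2-a^2)*R t ≤ 2 * Fv t := hEt
    _ ≤ 2 * (Real.exp (-(α/3*t)) * Fv 0) := by linarith
    _ ≤ 2 * (Real.exp (-(α/3*t)) * (3/2 * (P 0 + m*Q 0 + (b^2-a^2)*R 0))) := by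
        have := mul_le_mul_of_nonneg_left hF0 (Real.exp_nonneg (-(α/3*t)))
        linarith
    _ = 3 * Real.exp (-(α/3*t)) * (P 0 + m*Q 0 + (b^2-a^2)*R 0) := by ring
    _ ≤ 3 * Real.exp (-(min 1 (a^2) * min 1 (ε^2) / 3 * t)) * (P 0 + m*Q 0 + (b^2-a^2)*R 0) := by
        have h9 := mul_le_mul_of_nonneg_right hexple hE0n
        nlinarith
end
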